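/- Let n ≥ 2, let U ⊆ ℂ^n be open, let U' ⊆ ℂ^{n−1} be a connected open set containing the image of U under the projection onto the first n−1 coordinates, and let F be a nonconstant holomorphic function on U'. Define f : U → ℂ by f(z₁,…,z_n) = F(z₁,…,z_{n−1}). Then every point of {z ∈ U : f(z) = 0} belongs to the closure of the set W' = {z ∈ U : f(z) ≠ 0 and z_n = exp(1/f(z))}. -/

import Mathlib

open Complex Set

noncomputable section

abbrev Cn (n : ℕ) : Type := Fin n → ℂ

/-- `f` is holomorphic on `V` : complex Fréchet differentiable at each point of `V`. -/
def HoloOn {n : ℕ} {F : Type} [NormedAddCommGroup F] [NormedSpace ℂ F]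
    (f : Cn n → F) (V : Set (Cn n)) : Prop :=
  ∀ z ∈ V, DifferentiableAt ℂ f z

/-- Multiplication by `i` as an `ℝ`-linear map on `ℂⁿ`. -/
def mulI (n : ℕ) : Cn n →ₗ[ℝ] Cn n where
  toFun v := Complex.I • v
  map_add' v w := smul_add _ v w
  map_smul' c v := smul_comm Complex.I c v

/-- The Levi form of `ρ` is positive on nonzero vectors, at every point of `N`. -/
def LeviPositive {n : ℕ} (ρ : Cn n → ℝ) (N : Set (Cn n)) : Prop :=
  ∀ z ∈ N, ∀ v : Cn n, v ≠ 0 →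
    0 < (1/4 : ℝ) * (iteratedFDeriv ℝ 2 ρ z ![v, v]
      + iteratedFDeriv ℝ 2 ρ z ![Complex.I • v, Complex.I • v])

/-- Strongly pseudoconvex domain with smooth boundary (boundedness stated separately). -/
def IsSPSCDomain (n : ℕ) (Ω : Set (Cn n)) : Prop :=
  IsOpen Ω ∧ IsConnected Ω ∧
  ∃ (N : Set (Cn n)) (ρ : Cn n → ℝ), IsOpen N ∧ frontier Ω ⊆ N ∧
    ContDiffOn ℝ (⊤ : ℕ∞) ρ N ∧ Ω ∩ N = {z ∈ N | ρ z < 0} ∧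
    (∀ z ∈ frontier Ω, fderiv ℝ ρ z ≠ 0) ∧ LeviPositive ρ N

/-- The hull of `K` w.r.t. functions holomorphic on neighborhoods of `closure Ω`. -/
def hullIn (n : ℕ) (Ω K : Set (Cn n)) : Set (Cn n) :=
  {z ∈ closure Ω | ∀ V : Set (Cn n), IsOpen V → closure Ω ⊆ V →
    ∀ f : Cn n → ℂ, HoloOn f V → ‖f z‖ ≤ ⨆ w ∈ K, ‖f w‖}

/-- `A` is a relatively open subset of `S`. -/
def RelOpenIn {n : ℕ} (S A : Set (Cn n)) : Prop :=
  ∃ U : Set (Cn n), IsOpen U ∧ A = U ∩ S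

/-- The boundary of `A` inside `S` (for `A` relatively open in `S`). -/
def bdryIn {n : ℕ} (S A : Set (Cn n)) : Set (Cn n) := (closure A ∩ S) \ A

/-- `φ` is a local defining map for `M` near `p`. -/
def IsLocalDefiningMap {n k : ℕ} (M : Set (Cn n)) (p : Cn n)
    (V : Set (Cn n)) (φ : Cn n → Fin k → ℝ) : Prop :=
  IsOpen V ∧ p ∈ V ∧ ContDiffOn ℝ (⊤ : ℕ∞) φ V ∧
    (∀ z ∈ V, Function.Surjective (fderiv ℝ φ z)) ∧
    M ∩ V = {z ∈ V | φ z = 0}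

/-- The tangent space `ker Dφ(p)` as an `ℝ`-subspace of `ℂⁿ`. -/
def tangentAt {n k : ℕ} (φ : Cn n → Fin k → ℝ) (p : Cn n) : Submodule ℝ (Cn n) :=
  LinearMap.ker (fderiv ℝ φ p).toLinearMap

/-- `M` is a maximally complex `(2m+1)`-dimensional closed real submanifold of `A`. -/
def IsMaxCplxSubmanifold (n m : ℕ) (A M : Set (Cn n)) : Prop :=
  M ⊆ A ∧ closure M ∩ A ⊆ M ∧
  ∀ p ∈ M, ∃ (V : Set (Cn n)) (φ : Cn n → Fin (2*n - (2*m+1)) → ℝ),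
    IsLocalDefiningMap M p V φ ∧
    Module.finrank ℝ
      ↥(tangentAt φ p ⊓ Submodule.map (mulI n) (tangentAt φ p)) = 2*m

/-- The level set of `f` through `p` meets `M` transversally at `p`:
`ker Df(p) + T_pM = ℂⁿ` as real vector spaces. -/
def TransversalAt (n m : ℕ) (M : Set (Cn n)) (f : Cn n → ℂ) (p : Cn n) : Prop :=
  ∀ (V : Set (Cn n)) (φ : Cn n → Fin (2*n - (2*m+1)) → ℝ),
    IsLocalDefiningMap M p V φ →
    LinearMap.ker ((fderiv ℂ f p).restrictScalars ℝ).toLinearMap ⊔ tangentAt φ p = ⊤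

/-- `p` is a regular point of the `k`-dimensional variety `W`. -/
def IsVarietyRegularPoint (n k : ℕ) (W : Set (Cn n)) (p : Cn n) : Prop :=
  ∃ (V : Set (Cn n)) (F : Cn n → Fin (n - k) → ℂ), IsOpen V ∧ p ∈ V ∧
    HoloOn F V ∧ (∀ z ∈ V, Function.Surjective (fderiv ℂ F z)) ∧
    W ∩ V = {z ∈ V | F z = 0}

/-- `W` is a `k`-dimensional complex variety in the open set `G`. -/
def IsComplexVariety (n k : ℕ) (G W : Set (Cn n)) : Prop :=
  W ⊆ G ∧ closure W ∩ G ⊆ W ∧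
  (∀ p ∈ W, ∃ (V : Set (Cn n)) (ι : Type) (g : ι → Cn n → ℂ),
    IsOpen V ∧ p ∈ V ∧ V ⊆ G ∧ (∀ i, HoloOn (g i) V) ∧
    W ∩ V = {z ∈ V | ∀ i, g i z = 0}) ∧
  W ⊆ closure {p ∈ W | IsVarietyRegularPoint n k W p}

/-- The singular set of `W` is closed and discrete in `G`. -/
def HasIsolatedSingularities (n k : ℕ) (G W : Set (Cn n)) : Prop :=
  closure {p ∈ W | ¬ IsVarietyRegularPoint n k W p} ∩ G
      ⊆ {p ∈ W | ¬ IsVarietyRegularPoint n k W p} ∧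
  ∀ p ∈ W, ¬ IsVarietyRegularPoint n k W p →
    ∃ V : Set (Cn n), IsOpen V ∧ p ∈ V ∧
      {q ∈ W | ¬ IsVarietyRegularPoint n k W q} ∩ V = {p}

lemma lineHolo {n : ℕ} {F : Cn n → ℂ} {V : Set (Cn n)} (hV : IsOpen V)
    (hF : ∀ z ∈ V, DifferentiableAt ℂ F z) (a d : Cn n) :
    AnalyticOnNhd ℂ (fun t : ℂ => F (a + t • d)) {t : ℂ | a + t • d ∈ V} := by
  apply DifferentiableOn.analyticOnNhd _ (hV.preimage (by fun_prop))
  intro t ht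
  exact ((hF _ ht).comp t (by fun_prop)).differentiableWithinAt

lemma line_preconnected {n : ℕ} (a d : Cn n) {r : ℝ} (hr : 0 < r) :
    IsPreconnected {t : ℂ | a + t • d ∈ Metric.ball a r} := by
  have h : {t : ℂ | a + t • d ∈ Metric.ball a r} = {t : ℂ | ‖t‖ * ‖d‖ < r} := by
    ext t
    simp [Metric.mem_ball, dist_eq_norm, add_sub_cancel_left, norm_smul]
  rw [h]
  rcases eq_or_ne d 0 with hd | hd
  · simp only [hd, norm_zero, mul_zero]
    simpa [hr] using isPreconnected_univ (α := ℂ)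
  · have h2 : {t : ℂ | ‖t‖ * ‖d‖ < r} = Metric.ball (0:ℂ) (r / ‖d‖) := by
      ext t
      simp [Metric.mem_ball, dist_zero_right, lt_div_iff₀ (norm_pos_iff.2 hd)]
    rw [h2]; exact (convex_ball _ _).isPreconnected

lemma zero_on_ball {n : ℕ} {F : Cn n → ℂ} {a : Cn n} {r : ℝ} (hr : 0 < r)
    (hF : ∀ z ∈ Metric.ball a r, DifferentiableAt ℂ F z)
    (h0 : ∀ᶠ z in nhds a, F z = 0) :
    ∀ z ∈ Metric.ball a r, F z = 0 := by
  intro b hb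
  set d := b - a with hd
  have hT0 : (0:ℂ) ∈ {t : ℂ | a + t • d ∈ Metric.ball a r} := by
    simp only [Set.mem_setOf_eq, zero_smul, add_zero]
    exact Metric.mem_ball_self hr
  have hev : (fun t : ℂ => F (a + t • d)) =ᶠ[nhds 0] (fun _ => 0) := by
    have hcont : Filter.Tendsto (fun t : ℂ => a + t • d) (nhds 0) (nhds a) := by
      have : Continuous (fun t : ℂ => a + t • d) := by fun_prop
      simpa using this.tendsto 0
    exact hcont.eventually h0
  have key := (lineHolo Metric.isOpen_ball hF a d).eqOn_of_preconnected_of_eventuallyEq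
    analyticOnNhd_const (line_preconnected a d hr) hT0 hev
  have h1 : (1:ℂ) ∈ {t : ℂ | a + t • d ∈ Metric.ball a r} := by
    simpa [hd, dist_eq_norm] using hb
  simpa [hd] using key h1

lemma const_of_eventually {n : ℕ} {F : Cn n → ℂ} {U' : Set (Cn n)} (hU' : IsOpen U')
    (hconn : IsPreconnected U') (hF : ∀ z ∈ U', DifferentiableAt ℂ F z)
    {a : Cn n} (ha : a ∈ U') (h0 : ∀ᶠ z in nhds a, F z = 0) :
    ∀ z ∈ U', F z = 0 := by
  set u : Set (Cn n) := {z | ∀ᶠ w in nhds z, F w = 0} with hu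
  have huopen : IsOpen u := isOpen_setOf_eventually_nhds
  have hsub : U' ⊆ u := by
    refine hconn.subset_of_closure_inter_subset huopen ⟨a, ha, h0⟩ ?_
    rintro z ⟨hzc, hzU⟩
    obtain ⟨r, hrpos, hrsub⟩ := Metric.isOpen_iff.1 hU' z hzU
    obtain ⟨s, hs, hds⟩ := Metric.mem_closure_iff.1 hzc (r/2) (by positivity)
    have hball : Metric.ball s (r/2) ⊆ U' := by
      intro y hy
      apply hrsub
      rw [Metric.mem_ball] at *
      calc dist y z ≤ dist y s + dist s z := dist_triangle _ _ _
        _ < r/2 + r/2 := by rw [dist_comm z s] at hds; exact add_lt_add hy hds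
        _ = r := by ring
    have hz0 : ∀ y ∈ Metric.ball s (r/2), F y = 0 :=
      zero_on_ball (by positivity) (fun y hy => hF y (hball hy)) hs
    have hzmem : z ∈ Metric.ball s (r/2) := by
      rw [Metric.mem_ball]; exact hds
    exact Filter.eventually_of_mem (Metric.isOpen_ball.mem_nhds hzmem) hz0
  exact fun z hz => (hsub hz).self_of_nhds

lemma exists_zeta (c : ℂ) {δ r : ℝ} (hδ : 0 < δ) (hr : 0 < r) :
    ∃ ζ : ℂ, ζ ≠ 0 ∧ ‖ζ‖ < δ ∧ dist (Complex.exp ζ⁻¹) c < r := by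
  rcases eq_or_ne c 0 with hc | hc
  · obtain ⟨k, hk⟩ := exists_nat_gt (max δ⁻¹ r⁻¹)
    have hkpos : (0:ℝ) < k :=
      lt_of_lt_of_le (inv_pos.2 hδ) ((le_max_left _ _).trans hk.le)
    refine ⟨(-(k:ℂ))⁻¹, ?_, ?_, ?_⟩
    · apply inv_ne_zero
      simp only [ne_eq, neg_eq_zero, Nat.cast_eq_zero]
      exact_mod_cast hkpos.ne'
    · have : ‖(-(k:ℂ))⁻¹‖ = ((k:ℝ))⁻¹ := by
        rw [norm_inv, norm_neg]; norm_num
      rw [this]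
      have h1 : δ⁻¹ < (k:ℝ) := lt_of_le_of_lt (le_max_left _ _) hk
      exact (inv_lt_comm₀ hδ hkpos).mp h1
    · rw [inv_inv, hc, dist_zero_right]
      have : ‖Complex.exp (-(k:ℂ))‖ = Real.exp (-(k:ℝ)) := by
        rw [Complex.norm_exp]
        norm_num
      rw [this]
      have h1 : r⁻¹ < (k:ℝ) := lt_of_le_of_lt (le_max_right _ _) hk
      have h2 : (k:ℝ)⁻¹ < r := (inv_lt_comm₀ hr hkpos).mp h1
      have h3 : Real.exp (-(k:ℝ)) < (k:ℝ)⁻¹ := by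
        rw [Real.exp_neg]
        have hke : (k:ℝ) < Real.exp k :=
          lt_of_lt_of_le (lt_add_one _) (by linarith [Real.add_one_le_exp (k:ℝ)])
        exact inv_strictAnti₀ hkpos hke
      linarith
  · set A := Complex.log c with hA
    obtain ⟨k, hk⟩ := exists_nat_gt (δ⁻¹ + ‖A‖)
    have habs : ‖A‖ < (k:ℝ) := by
      have : (0:ℝ) ≤ ‖A‖ := norm_nonneg A
      nlinarith [inv_pos.2 hδ]
    set B : ℂ := A + (k:ℂ) * (2 * Real.pi * Complex.I) with hB
    have hnormB : δ⁻¹ < ‖B‖ := by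
      have h1 : ‖(k:ℂ) * (2 * Real.pi * Complex.I)‖ = (k:ℝ) * (2 * Real.pi) := by
        simp [norm_mul, Complex.norm_natCast, Complex.norm_I,
          abs_of_pos Real.pi_pos, mul_assoc]
      have h2 : ‖(k:ℂ) * (2 * Real.pi * Complex.I)‖ ≤ ‖B‖ + ‖A‖ := by
        have : (k:ℂ) * (2 * Real.pi * Complex.I) = B - A := by rw [hB]; ring
        rw [this]
        exact norm_sub_le _ _
      have hpi : (1:ℝ) ≤ 2 * Real.pi := by nlinarith [Real.pi_gt_three]
      have hAnorm : ‖A‖ = ‖A‖ := rfl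
      have hknonneg : (0:ℝ) ≤ (k:ℝ) := Nat.cast_nonneg k
      nlinarith [h1 ▸ h2, inv_pos.2 hδ]
    have hBne : B ≠ 0 := by
      intro h
      rw [h, norm_zero] at hnormB
      exact absurd hnormB (not_lt.2 (inv_pos.2 hδ).le)
    refine ⟨B⁻¹, inv_ne_zero hBne, ?_, ?_⟩
    · rw [norm_inv]
      exact (inv_lt_comm₀ hδ (lt_trans (inv_pos.2 hδ) hnormB)).mp hnormB
    · rw [inv_inv]
      have : Complex.exp B = c := by
        rw [hB, Complex.exp_add, Complex.exp_log hc]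
        have h9 : Complex.exp ((k:ℂ) * (2 * Real.pi * Complex.I)) = 1 := by
          have h10 := Complex.exp_int_mul_two_pi_mul_I (k:ℤ)
          push_cast at h10
          convert h10 using 2
        rw [h9, mul_one]
      rw [this, dist_self]
      exact hr

/-- Every zero of `f(z) = F(z₁,…,zₙ)` in `U ⊆ ℂ^{n+1}` is a cluster
point of `W' = {f ≠ 0, z_{n+1} = exp(1/f)}` (from Example 4.1 of the paper). -/
theorem zeros_cluster_points_of_graph (n : ℕ) (hn : 1 ≤ n)
    (U : Set (Cn (n+1))) (hU : IsOpen U)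
    (U' : Set (Cn n)) (hU' : IsOpen U') (hU'conn : IsConnected U')
    (hproj : (fun z : Cn (n+1) => fun i : Fin n => z i.castSucc) '' U ⊆ U')
    (F : Cn n → ℂ) (hF : HoloOn F U')
    (hFnc : ¬ ∃ c : ℂ, ∀ z ∈ U', F z = c) :
    ∀ w ∈ U, F (fun i => w i.castSucc) = 0 →
      w ∈ closure {z ∈ U | F (fun i => z i.castSucc) ≠ 0 ∧
        z (Fin.last n) = Complex.exp (1 / F (fun i => z i.castSucc))} := by
  intro w hw hw0
  set w' : Cn n := fun i => w i.castSucc with hw'def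
  have hw'U' : w' ∈ U' := hproj ⟨w, hw, rfl⟩
  have hnl : ¬ ∀ᶠ z in nhds w', F z = 0 := by
    intro h
    exact hFnc ⟨0, const_of_eventually hU' hU'conn.isPreconnected hF hw'U' h⟩
  rw [Metric.mem_closure_iff]
  intro ε hε
  obtain ⟨r0, hr0pos, hr0U⟩ := Metric.isOpen_iff.1 hU w hw
  obtain ⟨r1, hr1pos, hr1U'⟩ := Metric.isOpen_iff.1 hU' w' hw'U'
  set r := min (min ε r0) r1 with hrdef
  have hrpos : 0 < r := lt_min (lt_min hε hr0pos) hr1pos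
  have hrε : r ≤ ε := (min_le_left _ _).trans (min_le_left _ _)
  have hrr0 : r ≤ r0 := (min_le_left _ _).trans (min_le_right _ _)
  have hrr1 : r ≤ r1 := min_le_right _ _
  have hballU' : Metric.ball w' r ⊆ U' :=
    (Metric.ball_subset_ball hrr1).trans hr1U'
  -- a point near w' where F ≠ 0
  have hfreq : ∃ᶠ z in nhds w', F z ≠ 0 := Filter.not_eventually.mp hnl
  obtain ⟨p, hp, hpne⟩ := Filter.frequently_iff.mp hfreq
    (Metric.ball_mem_nhds w' (half_pos hrpos))
  set d := p - w' with hddef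
  set g : ℂ → ℂ := fun t => F (w' + t • d) with hgdef
  set T := {t : ℂ | w' + t • d ∈ Metric.ball w' r} with hTdef
  have hTopen : IsOpen T := Metric.isOpen_ball.preimage (by fun_prop)
  have hT0 : (0:ℂ) ∈ T := by
    simp only [hTdef, Set.mem_setOf_eq, zero_smul, add_zero]
    exact Metric.mem_ball_self hrpos
  have hpd : w' + (1:ℂ) • d = p := by rw [one_smul, hddef]; ring
  have hT1 : (1:ℂ) ∈ T := by
    simp only [hTdef, Set.mem_setOf_eq, hpd]
    exact Metric.ball_subset_ball (by linarith) hp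
  have hg : AnalyticOnNhd ℂ g T :=
    lineHolo Metric.isOpen_ball (fun z hz => hF z (hballU' hz)) w' d
  have hgT : IsPreconnected T := line_preconnected w' d hrpos
  have hg0 : g 0 = 0 := by
    simp only [hgdef, zero_smul, add_zero]
    exact hw0
  have hg1 : g 1 ≠ 0 := by simpa only [hgdef, hpd] using hpne
  rcases (hg 0 hT0).eventually_constant_or_nhds_le_map_nhds with hconst | hmap
  · exfalso
    have hev : g =ᶠ[nhds 0] (fun _ => (0:ℂ)) := by
      filter_upwards [hconst] with t ht
      rw [ht, hg0]
    exact hg1 (hg.eqOn_of_preconnected_of_eventuallyEq analyticOnNhd_const hgT hT0 hev hT1)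
  · rw [hg0] at hmap
    have himg : g '' T ∈ nhds (0:ℂ) := hmap (Filter.image_mem_map (hTopen.mem_nhds hT0))
    obtain ⟨δ, hδpos, hδsub⟩ := Metric.mem_nhds_iff.1 himg
    obtain ⟨ζ, hζ0, hζδ, hζexp⟩ := exists_zeta (w (Fin.last n)) hδpos hrpos
    have hζmem : ζ ∈ g '' T := hδsub (by rwa [Metric.mem_ball, dist_zero_right])
    obtain ⟨t, htT, hgt⟩ := hζmem
    set z' : Cn n := w' + t • d with hz'def
    set z : Cn (n+1) := Fin.snoc z' (Complex.exp ζ⁻¹) with hzdef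
    have hzproj : (fun i : Fin n => z i.castSucc) = z' := by
      funext i
      simp [hzdef, Fin.snoc_castSucc]
    have hFz' : F z' = ζ := hgt
    have hzlast : z (Fin.last n) = Complex.exp ζ⁻¹ := by
      simp [hzdef, Fin.snoc_last]
    have hz'ball : z' ∈ Metric.ball w' r := htT
    have hdistzw : dist z w < r := by
      rw [dist_pi_lt_iff hrpos]
      intro i
      induction i using Fin.lastCases with
      | last =>
        rw [hzlast]
        exact hζexp
      | cast j =>
        have h1 : z j.castSucc = z' j := by rw [← hzproj]
        have h2 : w j.castSucc = w' j := rfl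
        rw [h1, h2]
        exact lt_of_le_of_lt (dist_le_pi_dist z' w' j) hz'ball
    refine ⟨z, ⟨?_, ?_, ?_⟩, ?_⟩
    · apply hr0U
      rw [Metric.mem_ball]
      exact lt_of_lt_of_le hdistzw hrr0
    · rw [hzproj, hFz']
      exact hζ0
    · rw [hzproj, hFz', hzlast, one_div]
    · rw [dist_comm]
      exact lt_of_lt_of_le hdistzw hrε
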